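/- Let (D_i, Γⁱ)_{i∈ℕ} be a parametrix possessing complex of pre-Hilbert A-modules, with pseudoinverses g_i and projections p_i. Then for each i ≥ 1 the module of boundaries is Rng D_{i-1} = Ker D_i ∩ Ker p_i; in particular Rng D_{i-1} is a closed subspace of Γⁱ, being the intersection of kernels of continuous maps. -/

import Mathlib

/-- A pre-Hilbert module over a unital C*-algebra `A`: a left `A`-module equipped with an
`A`-valued inner product (`A`-linear in the first argument, conjugate-symmetric, positive
definite), whose norm is the one induced by the inner product. -/
class PreHilbertModule (A : Type*) (U : Type*) [CStarAlgebra A] [PartialOrder A]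
    [StarOrderedRing A] [NormedAddCommGroup U] [Module A U] extends Inner A U where
  inner_add_left (x y z : U) : inner (x + y) z = inner x z + inner y z
  inner_smul_left (a : A) (x y : U) : inner (a • x) y = a * inner x y
  star_inner (x y : U) : star (inner x y) = inner y x
  inner_self_nonneg (x : U) : 0 ≤ inner x x
  inner_self_eq_zero (x : U) : inner x x = 0 ↔ x = 0
  norm_eq (x : U) : ‖x‖ = Real.sqrt ‖inner x x‖

section Helpers

variable {A : Type*} [CStarAlgebra A] [PartialOrder A] [StarOrderedRing A]
variable {U : Type*} [NormedAddCommGroup U] [Module A U] [PreHilbertModule A U]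

lemma PHM.inner_zero_left (y : U) : (inner A (0 : U) y : A) = 0 := by
  have h := PreHilbertModule.inner_smul_left (0 : A) y y
  simpa using h

lemma PHM.inner_zero_right (x : U) : (inner A x (0 : U) : A) = 0 := by
  rw [← PreHilbertModule.star_inner, PHM.inner_zero_left, star_zero]

lemma PHM.inner_neg_left (x y : U) : (inner A (-x) y : A) = -(inner A x y : A) := by
  have h := PreHilbertModule.inner_smul_left (-1 : A) x y
  simpa [neg_one_smul] using h

lemma PHM.inner_sub_left (x y z : U) :
    (inner A (x - y) z : A) = (inner A x z : A) - inner A y z := by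
  rw [sub_eq_add_neg, PreHilbertModule.inner_add_left, PHM.inner_neg_left, sub_eq_add_neg]

lemma PHM.nonneg_add_eq_zero {a b : A} (ha : 0 ≤ a) (hb : 0 ≤ b) (h : a + b = 0) :
    a = 0 ∧ b = 0 := by
  have ha' : a = 0 := le_antisymm (by calc a ≤ a + b := le_add_of_nonneg_right hb
                                        _ = 0 := h) ha
  refine ⟨ha', ?_⟩
  rw [ha', zero_add] at h
  exact h

end Helpers

/-- in a parametrix possessing complex of pre-Hilbert `A`-modules, for each
`i ≥ 1` the module of boundaries satisfies `Rng D_{i-1} = Ker D_i ∩ Ker p_i`; in particular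
`Rng D_{i-1}` is a closed subspace of `Γ^i`, being an intersection of kernels of continuous
maps. -/
theorem boundaries_eq_ker_inter_ker_and_closed
    {A : Type*} [CStarAlgebra A] [PartialOrder A] [StarOrderedRing A]
    {Γ : ℕ → Type*} [∀ i, NormedAddCommGroup (Γ i)] [∀ i, Module A (Γ i)]
    [∀ i, PreHilbertModule A (Γ i)]
    (D : ∀ i, Γ i →L[A] Γ (i + 1)) (Dstar : ∀ i, Γ (i + 1) →L[A] Γ i)
    (hadj : ∀ i (u : Γ i) (v : Γ (i + 1)), (inner A (D i u) v : A) = inner A u (Dstar i v))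
    (hcomplex : ∀ i, (D (i + 1)).comp (D i) = 0)
    -- the associated Laplacians (with `D_{-1} := 0`)
    (Δ : ∀ i, Γ i →L[A] Γ i)
    (hΔ0 : Δ 0 = (Dstar 0).comp (D 0))
    (hΔ : ∀ i, Δ (i + 1) = (D i).comp (Dstar i) + (Dstar (i + 1)).comp (D (i + 1)))
    -- the complex is parametrix possessing
    (g p : ∀ i, Γ i →L[A] Γ i)
    (ha : ∀ i, ContinuousLinearMap.id A (Γ i) = (g i).comp (Δ i) + p i)
    (hb : ∀ i, ContinuousLinearMap.id A (Γ i) = (Δ i).comp (g i) + p i)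
    (hc : ∀ i, (Δ i).comp (p i) = 0) :
    ∀ i, LinearMap.range (D i : Γ i →ₗ[A] Γ (i + 1)) =
        LinearMap.ker (D (i + 1) : Γ (i + 1) →ₗ[A] Γ (i + 1 + 1)) ⊓
          LinearMap.ker (p (i + 1) : Γ (i + 1) →ₗ[A] Γ (i + 1)) ∧
      IsClosed (LinearMap.range (D i : Γ i →ₗ[A] Γ (i + 1)) : Set (Γ (i + 1))) := by
  -- pointwise versions of the operator identities
  have hcomp : ∀ i (x : Γ i), D (i + 1) (D i x) = 0 := by
    intro i x
    have h := congrFun (congrArg DFunLike.coe (hcomplex i)) x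
    simpa using h
  have hCp : ∀ i (x : Γ i), Δ i (p i x) = 0 := by
    intro i x
    have h := congrFun (congrArg DFunLike.coe (hc i)) x
    simpa using h
  have hBp : ∀ i (x : Γ i), x = Δ i (g i x) + p i x := by
    intro i x
    have h := congrFun (congrArg DFunLike.coe (hb i)) x
    simpa using h
  have hΔpt : ∀ i (x : Γ (i + 1)),
      Δ (i + 1) x = D i (Dstar i x) + Dstar (i + 1) (D (i + 1) x) := by
    intro i x
    have h := congrFun (congrArg DFunLike.coe (hΔ i)) x
    simpa using h
  -- key: elements of the kernel of the Laplacian are "harmonic"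
  have hker : ∀ i (u : Γ (i + 1)), Δ (i + 1) u = 0 → Dstar i u = 0 ∧ D (i + 1) u = 0 := by
    intro i u hu
    have hsum : D i (Dstar i u) + Dstar (i + 1) (D (i + 1) u) = 0 := by
      rw [← hΔpt i u]; exact hu
    have ea : (inner A (Dstar i u) (Dstar i u) : A) = inner A (D i (Dstar i u)) u :=
      (hadj i _ u).symm
    have eb : (inner A (D (i + 1) u) (D (i + 1) u) : A)
        = inner A (Dstar (i + 1) (D (i + 1) u)) u := by
      calc (inner A (D (i + 1) u) (D (i + 1) u) : A)
          = star (inner A (D (i + 1) u) (D (i + 1) u) : A) :=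
            (PreHilbertModule.star_inner _ _).symm
        _ = star (inner A u (Dstar (i + 1) (D (i + 1) u)) : A) := by
            rw [hadj (i + 1) u (D (i + 1) u)]
        _ = inner A (Dstar (i + 1) (D (i + 1) u)) u := PreHilbertModule.star_inner _ _
    have hab : (inner A (Dstar i u) (Dstar i u) : A)
        + (inner A (D (i + 1) u) (D (i + 1) u) : A) = 0 := by
      rw [ea, eb, ← PreHilbertModule.inner_add_left, hsum, PHM.inner_zero_left]
    obtain ⟨h1, h2⟩ := PHM.nonneg_add_eq_zero
      (PreHilbertModule.inner_self_nonneg (Dstar i u))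
      (PreHilbertModule.inner_self_nonneg (D (i + 1) u)) hab
    exact ⟨(PreHilbertModule.inner_self_eq_zero _).mp h1,
      (PreHilbertModule.inner_self_eq_zero _).mp h2⟩
  intro i
  have key : LinearMap.range (D i : Γ i →ₗ[A] Γ (i + 1))
      = LinearMap.ker (D (i + 1) : Γ (i + 1) →ₗ[A] Γ (i + 1 + 1)) ⊓
        LinearMap.ker (p (i + 1) : Γ (i + 1) →ₗ[A] Γ (i + 1)) := by
    apply le_antisymm
    · intro u hu
      obtain ⟨v, rfl⟩ := hu
      refine Submodule.mem_inf.mpr ⟨LinearMap.mem_ker.mpr (hcomp i v), ?_⟩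
      refine LinearMap.mem_ker.mpr ?_
      set q := p (i + 1) (D i v) with hqdef
      have hΔq : Δ (i + 1) q = 0 := hCp (i + 1) (D i v)
      obtain ⟨h1, h2⟩ := hker i q hΔq
      set w := g (i + 1) (D i v) with hwdef
      have hq' : q = D i v - Δ (i + 1) w := by
        have h := hBp (i + 1) (D i v)
        rw [← hqdef, ← hwdef] at h
        rw [eq_sub_iff_add_eq, h]
        exact add_comm _ _
      have e1 : (inner A (D i v) q : A) = 0 := by
        rw [hadj i v q, h1, PHM.inner_zero_right]
      have e2 : (inner A (D i (Dstar i w)) q : A) = 0 := by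
        rw [hadj i _ q, h1, PHM.inner_zero_right]
      have e3 : (inner A (Dstar (i + 1) (D (i + 1) w)) q : A) = 0 := by
        have h4 : (inner A q (Dstar (i + 1) (D (i + 1) w)) : A) = 0 := by
          rw [← hadj (i + 1) q _, h2, PHM.inner_zero_left]
        calc (inner A (Dstar (i + 1) (D (i + 1) w)) q : A)
            = star (inner A q (Dstar (i + 1) (D (i + 1) w)) : A) :=
              (PreHilbertModule.star_inner _ _).symm
          _ = 0 := by rw [h4, star_zero]
      have hqq : (inner A q q : A) = 0 := by
        calc (inner A q q : A) = inner A (D i v - Δ (i + 1) w) q := by rw [← hq']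
          _ = (inner A (D i v) q : A) - inner A (Δ (i + 1) w) q := PHM.inner_sub_left _ _ _
          _ = 0 := by
              rw [e1, hΔpt i w, PreHilbertModule.inner_add_left, e2, e3]
              simp
      exact (PreHilbertModule.inner_self_eq_zero q).mp hqq
    · intro u hu
      obtain ⟨hD', hp'⟩ := Submodule.mem_inf.mp hu
      have hDu : D (i + 1) u = 0 := LinearMap.mem_ker.mp hD'
      have hpu : p (i + 1) u = 0 := LinearMap.mem_ker.mp hp'
      set w := g (i + 1) u with hwdef
      have hdecomp : u = D i (Dstar i w) + Dstar (i + 1) (D (i + 1) w) := by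
        have h := hBp (i + 1) u
        rw [hpu, add_zero, ← hwdef] at h
        rw [h, hΔpt i w]
      have hz : Dstar (i + 1) (D (i + 1) w) = 0 := by
        have hD0 : D (i + 1) (Dstar (i + 1) (D (i + 1) w)) = 0 := by
          have h := congrArg (D (i + 1)) hdecomp
          rw [hDu, map_add, hcomp i (Dstar i w), zero_add] at h
          exact h.symm
        have h5 : (inner A (Dstar (i + 1) (D (i + 1) w))
            (Dstar (i + 1) (D (i + 1) w)) : A) = 0 := by
          rw [← hadj (i + 1) _ _, hD0, PHM.inner_zero_left]
        exact (PreHilbertModule.inner_self_eq_zero _).mp h5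
      refine ⟨Dstar i w, ?_⟩
      rw [hdecomp, hz, add_zero]
      rfl
  refine ⟨key, ?_⟩
  have hset : (LinearMap.range (D i : Γ i →ₗ[A] Γ (i + 1)) : Set (Γ (i + 1)))
      = (⇑(D (i + 1)) ⁻¹' {0}) ∩ (⇑(p (i + 1)) ⁻¹' {0}) := by
    ext u
    simp only [SetLike.mem_coe, key, Submodule.mem_inf, LinearMap.mem_ker,
      Set.mem_inter_iff, Set.mem_preimage, Set.mem_singleton_iff, ContinuousLinearMap.coe_coe]
  rw [hset]
  exact (isClosed_singleton.preimage (D (i + 1)).continuous).inter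
    (isClosed_singleton.preimage (p (i + 1)).continuous)
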